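/- Let $X$ be an irreducible ergodic finite Markov chain with stationary distribution $\pi$, and define the average hitting time $\overline{w} = \sum_{j \in S}\pi_j \mathbb{E}[W_j]$, where $W_j$ is the hitting time of $j$ from stationarity. Let $t^* = \sup_{l \in S}\mathbb{E}[T_{(l)}]$, where $T_{(l)}$ is a fastest strong stationary time started at $l$, with $\mathbb{E}[T_{(l)}] = \sum_{t \ge 0}(1 - \inf_i P^t(l,i)/\pi_i)$. Then $\overline{w} \le (|S| - 1) t^*$. -/

import Mathlib

open MeasureTheory Finset

/-- A (homogeneous) Markov chain with one-step transition matrix `P`. -/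
def IsMarkovChain {Ω E : Type*} [MeasurableSpace Ω] (μ : Measure Ω)
    (X : ℕ → Ω → E) (P : E → E → ℝ) : Prop :=
  ∀ (t : ℕ) (h : ℕ → E) (y : E),
    (μ {ω | X (t + 1) ω = y ∧ ∀ i ≤ t, X i ω = h i}).toReal
      = P (h t) y * (μ {ω | ∀ i ≤ t, X i ω = h i}).toReal

namespace AvgHit

open MeasureTheory

variable {S : Type*} [Fintype S] [DecidableEq S] [Nonempty S]

/-- separation at time `t` from start `l`. -/
noncomputable def sep (P : Matrix S S ℝ) (π : S → ℝ) (l : S) (t : ℕ) : ℝ :=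
  1 - ⨅ i : S, (P ^ t) l i / π i

/-- max separation. -/
noncomputable def sbar (P : Matrix S S ℝ) (π : S → ℝ) (t : ℕ) : ℝ :=
  ⨆ l : S, sep P π l t

variable {P : Matrix S S ℝ} {π : S → ℝ}
  (hP0 : ∀ i k, 0 ≤ P i k) (hP1 : ∀ i, ∑ k, P i k = 1)
  (hπpos : ∀ s, 0 < π s) (hπsum : ∑ s, π s = 1)
  (hstat : Matrix.vecMul π P = π)

lemma pow_succ_apply (t : ℕ) (i k : S) :
    (P ^ (t + 1)) i k = ∑ m, (P ^ t) i m * P m k := by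
  rw [pow_succ, Matrix.mul_apply]

include hP0 in
lemma powP_nonneg (t : ℕ) (i k : S) : 0 ≤ (P ^ t) i k := by
  induction t generalizing i k with
  | zero => simp [Matrix.one_apply]; positivity
  | succ t ih =>
      rw [pow_succ_apply]
      exact Finset.sum_nonneg fun m _ => mul_nonneg (ih i m) (hP0 m k)

include hP1 in
lemma powP_rowsum (t : ℕ) (i : S) : ∑ k, (P ^ t) i k = 1 := by
  induction t generalizing i with
  | zero => simp [Matrix.one_apply]
  | succ t ih =>
      simp only [pow_succ_apply]
      rw [Finset.sum_comm]
      calc ∑ m, ∑ k, (P ^ t) i m * P m k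
          = ∑ m, (P ^ t) i m * ∑ k, P m k := by
            simp [Finset.mul_sum]
        _ = 1 := by simp [hP1, ih]

include hstat in
lemma stat_pow (t : ℕ) : Matrix.vecMul π (P ^ t) = π := by
  induction t with
  | zero => simp
  | succ t ih => rw [pow_succ, ← Matrix.vecMul_vecMul, ih, hstat]

include hstat in
lemma stat_pow_apply (t : ℕ) (k : S) : ∑ l, π l * (P ^ t) l k = π k := by
  have := congrFun (stat_pow hstat t) k
  simpa [Matrix.vecMul, dotProduct] using this

lemma sep_le_one (hP0 : ∀ i k, 0 ≤ P i k) (hπpos : ∀ s, 0 < π s) (l : S) (t : ℕ) :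
    sep P π l t ≤ 1 := by
  have : (0:ℝ) ≤ ⨅ i : S, (P ^ t) l i / π i :=
    le_ciInf fun i => div_nonneg (powP_nonneg hP0 t l i) (hπpos i).le
  simp only [sep]; linarith

include hP0 hP1 hπpos hπsum in
lemma sep_nonneg (l : S) (t : ℕ) : 0 ≤ sep P π l t := by
  -- some i has ratio ≤ 1
  have h : ∃ i : S, (P ^ t) l i / π i ≤ 1 := by
    by_contra hc
    push_neg at hc
    have : (1:ℝ) < ∑ i, π i * ((P ^ t) l i / π i) := by
      calc (1:ℝ) = ∑ i, π i := hπsum.symm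
        _ < ∑ i, π i * ((P ^ t) l i / π i) := by
            apply Finset.sum_lt_sum_of_nonempty Finset.univ_nonempty
            intro i _
            have := hc i
            nlinarith [hπpos i]
    have heq : ∑ i, π i * ((P ^ t) l i / π i) = 1 := by
      have : ∀ i : S, π i * ((P ^ t) l i / π i) = (P ^ t) l i := by
        intro i
        rw [mul_comm]
        exact div_mul_cancel₀ _ (hπpos i).ne'
      rw [Finset.sum_congr rfl fun i _ => this i]
      exact powP_rowsum hP1 t l
    linarith
  obtain ⟨i, hi⟩ := h
  have : (⨅ i : S, (P ^ t) l i / π i) ≤ 1 := le_trans (ciInf_le (Finite.bddBelow_range _) i) hi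
  simp only [sep]; linarith

/-- key lower bound : P^t(l,i) ≥ (1 - sep l t) π i -/
lemma sep_lb (hπpos : ∀ s, 0 < π s) (l i : S) (t : ℕ) :
    (1 - sep P π l t) * π i ≤ (P ^ t) l i := by
  have h : (1 - sep P π l t) = ⨅ i : S, (P ^ t) l i / π i := by simp [sep]
  rw [h]
  exact (le_div_iff₀ (hπpos i)).mp (ciInf_le (Finite.bddBelow_range _) i)

include hP0 hπpos in
lemma sbar_nonneg' (hP1 : ∀ i, ∑ k, P i k = 1) (hπsum : ∑ s, π s = 1) (t : ℕ) :
    0 ≤ sbar P π t := by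
  obtain ⟨l⟩ := ‹Nonempty S›
  exact le_trans (sep_nonneg hP0 hP1 hπpos hπsum l t)
    (le_ciSup (f := fun l => sep P π l t) (Finite.bddAbove_range _) l)

lemma sep_le_sbar (l : S) (t : ℕ) : sep P π l t ≤ sbar P π t :=
  le_ciSup (f := fun l => sep P π l t) (Finite.bddAbove_range _) l

include hP0 hP1 hπpos hπsum hstat in
/-- submultiplicativity -/
lemma sep_submul (l : S) (t u : ℕ) :
    sep P π l (t + u) ≤ sep P π l t * sbar P π u := by
  set s := sep P π l t with hs
  set sb := sbar P π u with hsb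
  have key : ∀ i : S, (1 - s * sb) * π i ≤ (P ^ (t + u)) l i := by
    intro i
    have hdecomp : (P ^ (t + u)) l i = ∑ k, (P ^ t) l k * (P ^ u) k i := by
      rw [pow_add, Matrix.mul_apply]
    have e1 : ∑ k, (P ^ t) l k * (P ^ u) k i
        = ∑ k, ((1 - s) * π k) * (P ^ u) k i
          + ∑ k, ((P ^ t) l k - (1 - s) * π k) * (P ^ u) k i := by
      rw [← Finset.sum_add_distrib]
      exact Finset.sum_congr rfl fun k _ => by ring
    have e2 : ∑ k, ((1 - s) * π k) * (P ^ u) k i = (1 - s) * π i := by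
      calc ∑ k, ((1 - s) * π k) * (P ^ u) k i
          = (1 - s) * ∑ k, π k * (P ^ u) k i := by
            rw [Finset.mul_sum]; exact Finset.sum_congr rfl fun k _ => by ring
        _ = (1 - s) * π i := by rw [stat_pow_apply hstat]
    have e3 : ∑ k, ((P ^ t) l k - (1 - s) * π k) * ((1 - sb) * π i)
        ≤ ∑ k, ((P ^ t) l k - (1 - s) * π k) * (P ^ u) k i := by
      apply Finset.sum_le_sum
      intro k _
      have hcoef : 0 ≤ (P ^ t) l k - (1 - s) * π k := by
        have := sep_lb (P := P) hπpos l k t; rw [← hs] at this; linarith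
      apply mul_le_mul_of_nonneg_left _ hcoef
      have h1 := sep_lb (P := P) hπpos k i u
      have h2 : sep P π k u ≤ sb := sep_le_sbar k u
      nlinarith [hπpos i]
    have e4 : ∑ k, ((P ^ t) l k - (1 - s) * π k) * ((1 - sb) * π i)
        = s * ((1 - sb) * π i) := by
      rw [← Finset.sum_mul, Finset.sum_sub_distrib, powP_rowsum hP1, ← Finset.mul_sum,
        hπsum]
      ring
    rw [hdecomp, e1, e2]
    nlinarith [e3, e4]
  have h2 : (1 - s * sb) ≤ ⨅ i : S, (P ^ (t + u)) l i / π i := by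
    apply le_ciInf
    intro i
    rw [le_div_iff₀ (hπpos i)]
    exact key i
  simp only [sep] at *
  linarith


lemma geom_partial_le (c : ℝ) (h0 : 0 ≤ c) (h1 : c < 1) (n : ℕ) :
    ∑ i ∈ Finset.range n, c ^ i ≤ (1 - c)⁻¹ := by
  rw [geom_sum_eq (by linarith : c ≠ 1) n]
  have hc : (0:ℝ) < 1 - c := by linarith
  have h2 : (c ^ n - 1)/(c - 1) = (1 - c ^ n)/(1 - c) := by
    rw [← neg_sub (c^n) 1, ← neg_sub c 1, neg_div_neg_eq]
  rw [h2, div_le_iff₀ hc, inv_mul_cancel₀ hc.ne']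
  nlinarith [pow_nonneg h0 n]

lemma summable_pow_div (c : ℝ) (h0 : 0 ≤ c) (h1 : c < 1) (t1 : ℕ) (ht1 : 0 < t1) :
    Summable (fun t : ℕ => c ^ (t / t1)) := by
  apply summable_of_sum_range_le (c := t1 * (1 - c)⁻¹)
  · intro n; positivity
  · intro n
    have hsub : ∑ i ∈ range n, c ^ (i / t1) ≤ ∑ i ∈ range (t1 * n), c ^ (i / t1) := by
      apply Finset.sum_le_sum_of_subset_of_nonneg
      · exact Finset.range_subset_range.mpr (Nat.le_mul_of_pos_left n ht1)
      · intros; positivity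
    have hblock : ∀ m : ℕ, ∑ i ∈ Finset.range (t1 * m), c ^ (i / t1)
        = (t1 : ℝ) * ∑ k ∈ Finset.range m, c ^ k := by
      intro m
      induction m with
      | zero => simp
      | succ m ih =>
          rw [Nat.mul_succ, Finset.sum_range_add, ih, Finset.sum_range_succ]
          have h3 : ∀ x ∈ Finset.range t1, c ^ ((t1 * m + x) / t1) = c ^ m := by
            intro x hx
            congr 1
            rw [add_comm, Nat.add_mul_div_left _ _ ht1,
              Nat.div_eq_of_lt (Finset.mem_range.mp hx), zero_add]
          rw [Finset.sum_congr rfl h3, Finset.sum_const, Finset.card_range]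
          push_cast; ring
    calc ∑ i ∈ Finset.range n, c ^ (i / t1)
        ≤ ∑ i ∈ Finset.range (t1 * n), c ^ (i / t1) := hsub
      _ = (t1 : ℝ) * ∑ k ∈ Finset.range n, c ^ k := hblock n
      _ ≤ t1 * (1 - c)⁻¹ := by
          apply mul_le_mul_of_nonneg_left (geom_partial_le c h0 h1 n)
          positivity

include hP0 hP1 hπpos hπsum hstat in
lemma exists_geom_bound (herg : ∃ t, ∀ i k, 0 < (P ^ t) i k) :
    ∃ (t1 : ℕ) (c : ℝ), 0 < t1 ∧ 0 ≤ c ∧ c < 1 ∧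
      ∀ t, sbar P π t ≤ c ^ (t / t1) := by
  obtain ⟨t0, ht0⟩ := herg
  set t1 := t0 + 1 with ht1def
  have ht1 : 0 < t1 := Nat.succ_pos t0
  have hpos : ∀ l i, 0 < (P ^ t1) l i := by
    intro l i
    have hex : ∃ m, 0 < P m i := by
      by_contra hc
      push_neg at hc
      have hz : ∀ m, P m i = 0 := fun m => le_antisymm (hc m) (hP0 m i)
      have := congrFun hstat i
      simp only [Matrix.vecMul, dotProduct] at this
      rw [Finset.sum_congr rfl (fun m _ => by rw [hz m, mul_zero])] at this
      simp at this
      exact absurd this.symm (hπpos i).ne'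
    obtain ⟨m, hm⟩ := hex
    rw [pow_succ_apply]
    apply Finset.sum_pos'
    · intro k _; exact mul_nonneg (powP_nonneg hP0 t0 l k) (hP0 k i)
    · exact ⟨m, Finset.mem_univ m, mul_pos (ht0 l m) hm⟩
  set c := sbar P π t1 with hcdef
  have hc0 : 0 ≤ c := sbar_nonneg' hP0 hπpos hP1 hπsum t1
  have hc1 : c < 1 := by
    obtain ⟨l0, hl0⟩ := Finite.exists_max (fun l => sep P π l t1)
    have : c ≤ sep P π l0 t1 := ciSup_le hl0
    have hlt : sep P π l0 t1 < 1 := by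
      obtain ⟨i0, hi0⟩ := Finite.exists_min (fun i => (P ^ t1) l0 i / π i)
      have hpos0 : 0 < (P ^ t1) l0 i0 / π i0 := div_pos (hpos l0 i0) (hπpos i0)
      have h4 : (P ^ t1) l0 i0 / π i0 ≤ ⨅ i : S, (P ^ t1) l0 i / π i := le_ciInf hi0
      simp only [sep]
      linarith
    linarith
  refine ⟨t1, c, ht1, hc0, hc1, ?_⟩
  intro t
  induction t using Nat.strong_induction_on with
  | _ t ih =>
    rcases le_or_gt t1 t with hle | hlt
    · have ht : t1 + (t - t1) = t := Nat.add_sub_cancel' hle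
      have hstep : ∀ l, sep P π l t ≤ c * c ^ ((t - t1) / t1) := by
        intro l
        calc sep P π l t = sep P π l (t1 + (t - t1)) := by rw [ht]
          _ ≤ sep P π l t1 * sbar P π (t - t1) :=
              sep_submul hP0 hP1 hπpos hπsum hstat l t1 (t - t1)
          _ ≤ c * c ^ ((t - t1) / t1) := by
              apply mul_le_mul (sep_le_sbar l t1)
                (ih (t - t1) (by omega))
                (sbar_nonneg' hP0 hπpos hP1 hπsum (t - t1)) hc0
      have hdiv : t / t1 = (t - t1) / t1 + 1 := Nat.div_eq_sub_div ht1 hle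
      have : sbar P π t ≤ c * c ^ ((t - t1) / t1) := ciSup_le hstep
      rw [hdiv, pow_succ]
      linarith [this]
    · have : t / t1 = 0 := Nat.div_eq_of_lt hlt
      rw [this, pow_zero]
      exact ciSup_le fun l => sep_le_one hP0 hπpos l t

include hP0 hP1 hπpos hπsum hstat in
lemma summable_sbar (herg : ∃ t, ∀ i k, 0 < (P ^ t) i k) :
    Summable (sbar P π) := by
  obtain ⟨t1, c, ht1, hc0, hc1, hbd⟩ := exists_geom_bound hP0 hP1 hπpos hπsum hstat herg
  exact Summable.of_nonneg_of_le (fun t => sbar_nonneg' hP0 hπpos hP1 hπsum t) hbd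
    (summable_pow_div c hc0 hc1 t1 ht1)

include hP0 hP1 hπpos hπsum hstat in
lemma summable_sep (herg : ∃ t, ∀ i k, 0 < (P ^ t) i k) (l : S) :
    Summable (sep P π l) := by
  exact Summable.of_nonneg_of_le (fun t => sep_nonneg hP0 hP1 hπpos hπsum l t)
    (fun t => sep_le_sbar l t) (summable_sbar hP0 hP1 hπpos hπsum hstat herg)


/-! ## Part II : first passage decomposition -/

variable (P) (π) in
/-- `av j t k` : mass of paths from `π` avoiding `j` for `t` steps, ending at `k`. -/
noncomputable def av (j : S) : ℕ → S → ℝ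
  | 0 => fun k => if k = j then 0 else π k
  | (t+1) => fun k => if k = j then 0 else ∑ m, av j t m * P m k

variable (P) (π) in
/-- first passage probability to `j` at time `t`, started from `π`. -/
noncomputable def fp (j : S) : ℕ → ℝ
  | 0 => π j
  | (t+1) => ∑ m, av P π j t m * P m j

variable (P) (π) in
/-- probability of avoiding `j` through time `t`, started from `π`. -/
noncomputable def qa (j : S) (t : ℕ) : ℝ := ∑ k, av P π j t k

variable (P) (π) in
noncomputable def Dj (j : S) (t : ℕ) : ℝ := (P ^ t) j j - π j

lemma av_apply_self (j : S) (t : ℕ) : av P π j t j = 0 := by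
  cases t <;> simp [av]

include hP0 hπpos in
lemma av_nonneg (j : S) (t : ℕ) (k : S) : 0 ≤ av P π j t k := by
  induction t generalizing k with
  | zero =>
      simp only [av]
      split
      · exact le_refl 0
      · exact (hπpos k).le
  | succ t ih =>
      simp only [av]
      split
      · exact le_refl 0
      · exact Finset.sum_nonneg fun m _ => mul_nonneg (ih m) (hP0 m k)

include hP0 hπpos in
lemma fp_nonneg (j : S) (t : ℕ) : 0 ≤ fp P π j t := by
  cases t with
  | zero => exact (hπpos j).le
  | succ t =>
      exact Finset.sum_nonneg fun m _ =>
        mul_nonneg (av_nonneg hP0 hπpos j t m) (hP0 m j)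

include hP0 hπpos in
lemma qa_nonneg (j : S) (t : ℕ) : 0 ≤ qa P π j t :=
  Finset.sum_nonneg fun k _ => av_nonneg hP0 hπpos j t k

lemma sum_ite_zero_eq (j : S) (F : S → ℝ) :
    ∑ k, (if k = j then 0 else F k) = (∑ k, F k) - F j := by
  have : ∀ k : S, (if k = j then (0:ℝ) else F k) = F k - (if k = j then F k else 0) := by
    intro k; split <;> simp_all
  rw [Finset.sum_congr rfl fun k _ => this k, Finset.sum_sub_distrib,
    Finset.sum_ite_eq' Finset.univ j F]
  simp

/-- key decomposition : `π P^t = av t + ∑_{s ≤ t} fp s · e_j P^{t-s}`. -/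
lemma first_passage_decomp (j : S) (t : ℕ) (k : S) :
    ∑ l, π l * (P ^ t) l k
      = av P π j t k + ∑ s ∈ Finset.range (t + 1), fp P π j s * (P ^ (t - s)) j k := by
  induction t generalizing k with
  | zero =>
      simp only [pow_zero, Matrix.one_apply, Finset.range_one, Finset.sum_singleton,
        Nat.sub_zero, mul_ite, mul_one, mul_zero, av, fp]
      rw [Finset.sum_ite_eq' Finset.univ k π]
      simp only [Finset.mem_univ, if_true]
      by_cases hk : k = j
      · subst hk; simp
      · simp [hk, Ne.symm hk]
  | succ t ih =>
      have hlhs : ∑ l, π l * (P ^ (t+1)) l k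
          = ∑ m, (∑ l, π l * (P ^ t) l m) * P m k := by
        simp only [pow_succ_apply, Finset.mul_sum, Finset.sum_mul]
        rw [Finset.sum_comm]
        exact Finset.sum_congr rfl fun m _ => Finset.sum_congr rfl fun l _ => by ring
      rw [hlhs, Finset.sum_congr rfl fun m _ => by rw [ih m]]
      have e1 : ∑ m, (av P π j t m + ∑ s ∈ Finset.range (t + 1),
            fp P π j s * (P ^ (t - s)) j m) * P m k
          = (∑ m, av P π j t m * P m k)
            + ∑ m, (∑ s ∈ Finset.range (t + 1), fp P π j s * (P ^ (t - s)) j m) * P m k := by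
        rw [← Finset.sum_add_distrib]
        exact Finset.sum_congr rfl fun m _ => add_mul _ _ _
      have e2 : ∑ m, (∑ s ∈ Finset.range (t + 1), fp P π j s * (P ^ (t - s)) j m) * P m k
          = ∑ s ∈ Finset.range (t + 1), fp P π j s * (P ^ (t + 1 - s)) j k := by
        simp only [Finset.sum_mul]
        rw [Finset.sum_comm]
        apply Finset.sum_congr rfl
        intro s hs
        have hs' : s ≤ t := Nat.lt_succ_iff.mp (Finset.mem_range.mp hs)
        have ht1 : t + 1 - s = (t - s) + 1 := by omega
        rw [ht1, pow_succ_apply, Finset.mul_sum]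
        exact Finset.sum_congr rfl fun m _ => by ring
      have e3 : ∑ m, av P π j t m * P m k
          = av P π j (t + 1) k + fp P π j (t + 1) * (P ^ (t + 1 - (t + 1))) j k := by
        simp only [Nat.sub_self, pow_zero, Matrix.one_apply]
        by_cases hk : k = j
        · subst hk
          simp [av_apply_self, fp]
        · simp only [av, fp, if_neg hk, Ne.symm hk, if_false, mul_zero, add_zero]
      rw [e1, e2, e3,
        Finset.sum_range_succ (f := fun s => fp P π j s * (P ^ (t + 1 - s)) j k) (n := t + 1)]
      ring


include hstat in
lemma stationary_renewal (j : S) (t : ℕ) :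
    π j = ∑ s ∈ Finset.range (t + 1), fp P π j s * (P ^ (t - s)) j j := by
  have h := first_passage_decomp (P := P) (π := π) j t j
  rw [stat_pow_apply hstat, av_apply_self, zero_add] at h
  exact h

include hP1 hπsum in
lemma fp_partial (j : S) (t : ℕ) :
    ∑ s ∈ Finset.range (t + 1), fp P π j s + qa P π j t = 1 := by
  induction t with
  | zero =>
      show ∑ s ∈ Finset.range 1, fp P π j s + qa P π j 0 = 1
      rw [Finset.sum_range_one]
      show fp P π j 0 + ∑ k, av P π j 0 k = 1
      show π j + ∑ k, (if k = j then 0 else π k) = 1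
      rw [sum_ite_zero_eq, hπsum]
      ring
  | succ t ih =>
      have hq : qa P π j (t + 1) = qa P π j t - fp P π j (t + 1) := by
        show ∑ k, av P π j (t+1) k = _
        have hav : ∀ k, av P π j (t+1) k
            = if k = j then 0 else ∑ m, av P π j t m * P m k := fun k => rfl
        rw [Finset.sum_congr rfl fun k _ => hav k,
          sum_ite_zero_eq j (fun k => ∑ m, av P π j t m * P m k)]
        have h1 : ∑ k, ∑ m, av P π j t m * P m k = qa P π j t := by
          rw [Finset.sum_comm]
          simp only [qa]
          apply Finset.sum_congr rfl
          intro m _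
          rw [← Finset.mul_sum, hP1 m, mul_one]
        rw [h1]
        rfl
      rw [Finset.sum_range_succ, hq]
      linarith

include hP1 hπsum hstat in
lemma conv_identity (j : S) (t : ℕ) :
    π j * qa P π j t = ∑ s ∈ Finset.range (t + 1), fp P π j s * Dj P π j (t - s) := by
  have h1 := stationary_renewal hstat j t
  have h2 := fp_partial hP1 hπsum j t
  have h3 : π j * qa P π j t
      = π j - π j * ∑ s ∈ Finset.range (t + 1), fp P π j s := by
    have : qa P π j t = 1 - ∑ s ∈ Finset.range (t + 1), fp P π j s := by linarith
    rw [this]; ring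
  rw [h3]
  calc π j - π j * ∑ s ∈ Finset.range (t + 1), fp P π j s
      = ∑ s ∈ Finset.range (t + 1), fp P π j s * (P ^ (t - s)) j j
        - ∑ s ∈ Finset.range (t + 1), fp P π j s * π j := by
        rw [← h1, Finset.mul_sum]
        congr 1
        exact Finset.sum_congr rfl fun s _ => by ring
    _ = _ := by
        rw [← Finset.sum_sub_distrib]
        exact Finset.sum_congr rfl fun s _ => by simp only [Dj]; ring

include hP0 hP1 hπpos hπsum in
lemma summable_fp (j : S) : Summable (fp P π j) := by
  apply summable_of_sum_range_le (c := 1) (fun t => fp_nonneg hP0 hπpos j t)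
  intro n
  cases n with
  | zero => simp
  | succ n =>
      have h1 := fp_partial hP1 hπsum j n
      have h2 := qa_nonneg hP0 hπpos j n
      linarith

include hP0 hP1 hπpos hπsum in
lemma tsum_fp_le_one (j : S) : ∑' t, fp P π j t ≤ 1 := by
  apply Summable.tsum_le_of_sum_range_le (summable_fp hP0 hP1 hπpos hπsum j)
  intro n
  cases n with
  | zero => simp
  | succ n =>
      have h1 := fp_partial hP1 hπsum j n
      have h2 := qa_nonneg hP0 hπpos j n
      linarith

include hπpos hπsum in
lemma π_le_one (s : S) : π s ≤ 1 := by
  rw [← hπsum]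
  exact Finset.single_le_sum (fun i _ => (hπpos i).le) (Finset.mem_univ s)

include hP0 hP1 hπpos hπsum hstat in
lemma abs_Dj_le (j : S) (t : ℕ) : |Dj P π j t| ≤ sbar P π t := by
  have hπj := hπpos j
  have hπj1 := π_le_one hπpos hπsum j
  have hsb0 := sbar_nonneg' hP0 hπpos hP1 hπsum (t := t)
  have hsepj := sep_le_sbar (P := P) (π := π) j t
  have hsepj0 := sep_nonneg hP0 hP1 hπpos hπsum j t
  rw [abs_le]
  constructor
  · -- lower bound
    have hlb := sep_lb (P := P) hπpos j j t
    simp only [Dj]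
    nlinarith
  · -- upper bound
    have hstatj := stat_pow_apply hstat t j
    have hsplit : π j * (P ^ t) j j + ∑ l ∈ Finset.univ.erase j, π l * (P ^ t) l j
        = π j := by
      rw [Finset.add_sum_erase Finset.univ (fun l => π l * (P ^ t) l j)
        (Finset.mem_univ j)]
      exact hstatj
    have herase_sum : ∑ l ∈ Finset.univ.erase j, π l = 1 - π j := by
      rw [Finset.sum_erase_eq_sub (Finset.mem_univ j), hπsum]
    have hbd : ∑ l ∈ Finset.univ.erase j, π l * ((1 - sbar P π t) * π j)
        ≤ ∑ l ∈ Finset.univ.erase j, π l * (P ^ t) l j := by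
      apply Finset.sum_le_sum
      intro l _
      apply mul_le_mul_of_nonneg_left _ (hπpos l).le
      have h1 := sep_lb (P := P) hπpos l j t
      have h2 := sep_le_sbar (P := P) (π := π) l t
      nlinarith
    rw [← Finset.sum_mul, herase_sum] at hbd
    have h5 : π j * (P ^ t) j j ≤ π j - (1 - π j) * ((1 - sbar P π t) * π j) := by
      linarith
    simp only [Dj]
    have h6 : π j * ((P ^ t) j j - π j) ≤ π j * sbar P π t := by
      nlinarith [mul_nonneg (mul_nonneg hπj.le hπj.le) hsb0]
    exact le_of_mul_le_mul_left h6 hπj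

include hP0 hP1 hπpos hπsum hstat in
lemma summable_Dj (herg : ∃ t, ∀ i k, 0 < (P ^ t) i k) (j : S) :
    Summable (Dj P π j) := by
  apply Summable.of_abs
  apply Summable.of_nonneg_of_le (fun t => abs_nonneg _)
    (fun t => abs_Dj_le hP0 hP1 hπpos hπsum hstat j t)
  exact summable_sbar hP0 hP1 hπpos hπsum hstat herg

include hP0 hP1 hπpos hπsum hstat in
lemma Dj_le_sum (j : S) (t : ℕ) :
    Dj P π j t ≤ ∑ l ∈ Finset.univ.erase j, π l * sep P π l t := by
  have hπj := hπpos j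
  have hstatj := stat_pow_apply hstat t j
  have hsplit : π j * (P ^ t) j j + ∑ l ∈ Finset.univ.erase j, π l * (P ^ t) l j
      = π j := by
    rw [Finset.add_sum_erase Finset.univ (fun l => π l * (P ^ t) l j)
      (Finset.mem_univ j)]
    exact hstatj
  have herase_sum : ∑ l ∈ Finset.univ.erase j, π l = 1 - π j := by
    rw [Finset.sum_erase_eq_sub (Finset.mem_univ j), hπsum]
  have hbd : ∑ l ∈ Finset.univ.erase j, π l * ((1 - sep P π l t) * π j)
      ≤ ∑ l ∈ Finset.univ.erase j, π l * (P ^ t) l j := by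
    apply Finset.sum_le_sum
    intro l _
    exact mul_le_mul_of_nonneg_left (sep_lb (P := P) hπpos l j t) (hπpos l).le
  have hexp : ∑ l ∈ Finset.univ.erase j, π l * ((1 - sep P π l t) * π j)
      = π j * (1 - π j) - π j * ∑ l ∈ Finset.univ.erase j, π l * sep P π l t := by
    rw [← herase_sum, Finset.mul_sum, Finset.mul_sum, ← Finset.sum_sub_distrib]
    exact Finset.sum_congr rfl fun l _ => by ring
  rw [hexp] at hbd
  have hkey : π j * Dj P π j t ≤ π j * ∑ l ∈ Finset.univ.erase j, π l * sep P π l t := by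
    simp only [Dj]
    nlinarith
  exact le_of_mul_le_mul_left hkey hπj

include hP0 hP1 hπpos hπsum hstat in
lemma qa_summable_and_bound (herg : ∃ t, ∀ i k, 0 < (P ^ t) i k) (j : S) :
    Summable (qa P π j) ∧
      π j * ∑' t, qa P π j t ≤ ∑' t, Dj P π j t := by
  have hfs := summable_fp hP0 hP1 hπpos hπsum j
  have hfn : Summable (fun t => ‖fp P π j t‖) := by
    simpa [Real.norm_eq_abs] using hfs.abs
  have hDabs : Summable (fun t => |Dj P π j t|) :=
    Summable.of_nonneg_of_le (fun t => abs_nonneg _)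
      (fun t => abs_Dj_le hP0 hP1 hπpos hπsum hstat j t)
      (summable_sbar hP0 hP1 hπpos hπsum hstat herg)
  have hDn : Summable (fun t => ‖Dj P π j t‖) := by
    simpa [Real.norm_eq_abs] using hDabs
  have hconv := tsum_mul_tsum_eq_tsum_sum_range_of_summable_norm hfn hDn
  have hid : ∀ n : ℕ, ∑ k ∈ Finset.range (n + 1), fp P π j k * Dj P π j (n - k)
      = π j * qa P π j n := fun n => (conv_identity hP1 hπsum hstat j n).symm
  have hconv_sum : Summable (fun n => π j * qa P π j n) := by
    have h := (summable_norm_sum_mul_range_of_summable_norm hfn hDn).of_norm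
    exact h.congr hid
  have hqa_sum : Summable (qa P π j) := by
    have h2 := hconv_sum.mul_left (π j)⁻¹
    have : (fun n => (π j)⁻¹ * (π j * qa P π j n)) = qa P π j := funext fun n => by
      rw [← mul_assoc, inv_mul_cancel₀ (hπpos j).ne', one_mul]
    rwa [this] at h2
  refine ⟨hqa_sum, ?_⟩
  have hmain : π j * ∑' t, qa P π j t = (∑' t, fp P π j t) * ∑' t, Dj P π j t := by
    rw [← tsum_mul_left, hconv]
    exact (tsum_congr hid).symm
  have hq0 : 0 ≤ π j * ∑' t, qa P π j t :=
    mul_nonneg (hπpos j).le (tsum_nonneg (fun t => qa_nonneg hP0 hπpos j t))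
  have hfp_pos : 0 < ∑' t, fp P π j t := by
    have h0 : fp P π j 0 ≤ ∑' t, fp P π j t :=
      Summable.le_tsum hfs 0 (fun s _ => fp_nonneg hP0 hπpos j s)
    have : fp P π j 0 = π j := rfl
    rw [this] at h0
    linarith [hπpos j]
  have hD0 : 0 ≤ ∑' t, Dj P π j t := by
    by_contra hneg
    push_neg at hneg
    have := mul_neg_of_pos_of_neg hfp_pos hneg
    rw [← hmain] at this
    linarith
  rw [hmain]
  calc (∑' t, fp P π j t) * ∑' t, Dj P π j t
      ≤ 1 * ∑' t, Dj P π j t :=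
        mul_le_mul_of_nonneg_right (tsum_fp_le_one hP0 hP1 hπpos hπsum j) hD0
    _ = ∑' t, Dj P π j t := one_mul _

include hP0 hP1 hπpos hπsum hstat in
lemma tsum_Dj_le (herg : ∃ t, ∀ i k, 0 < (P ^ t) i k) (j : S) :
    ∑' t, Dj P π j t ≤ ∑ l ∈ Finset.univ.erase j, π l * ∑' t, sep P π l t := by
  have hsum_rhs : ∀ l ∈ Finset.univ.erase j, Summable (fun t => π l * sep P π l t) :=
    fun l _ => (summable_sep hP0 hP1 hπpos hπsum hstat herg l).mul_left (π l)
  calc ∑' t, Dj P π j t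
      ≤ ∑' t, ∑ l ∈ Finset.univ.erase j, π l * sep P π l t := by
        apply Summable.tsum_le_tsum (fun t => Dj_le_sum hP0 hP1 hπpos hπsum hstat j t)
          (summable_Dj hP0 hP1 hπpos hπsum hstat herg j)
        exact summable_sum fun l hl => hsum_rhs l hl
    _ = ∑ l ∈ Finset.univ.erase j, π l * ∑' t, sep P π l t := by
        rw [Summable.tsum_finsetSum (fun l hl => hsum_rhs l hl)]
        exact Finset.sum_congr rfl fun l _ => tsum_mul_left

/-! ## Part III : path sums -/

lemma path_sum (j : S) (t : ℕ) (k : S) :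
    ∑ g : Fin (t+1) → S, (if (∀ i, g i ≠ j) ∧ g (Fin.last t) = k
      then π (g 0) * ∏ i : Fin t, P (g i.castSucc) (g i.succ) else 0)
      = av P π j t k := by
  induction t generalizing k with
  | zero =>
      have he : ∀ g : Fin 1 → S,
          ((∀ i, g i ≠ j) ∧ g (Fin.last 0) = k) ↔ (g 0 ≠ j ∧ g 0 = k) := by
        intro g
        constructor
        · rintro ⟨h1, h2⟩; exact ⟨h1 0, h2⟩
        · rintro ⟨h1, h2⟩
          exact ⟨fun i => by rw [Subsingleton.elim i 0]; exact h1, h2⟩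
      calc ∑ g : Fin 1 → S, (if (∀ i, g i ≠ j) ∧ g (Fin.last 0) = k
            then π (g 0) * ∏ i : Fin 0, P (g i.castSucc) (g i.succ) else 0)
          = ∑ g : Fin 1 → S, (if g 0 ≠ j ∧ g 0 = k then π (g 0) else 0) := by
            apply Finset.sum_congr rfl
            intro g _
            rw [show (∏ i : Fin 0, P (g i.castSucc) (g i.succ)) = 1 by simp, mul_one]
            exact if_congr (he g) rfl rfl
        _ = ∑ x : S, (if x ≠ j ∧ x = k then π x else 0) :=
            Fintype.sum_equiv (Equiv.funUnique (Fin 1) S) _ _ (fun g => rfl)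
        _ = ∑ x : S, (if x = k then (if x ≠ j then π x else 0) else 0) :=
            Finset.sum_congr rfl fun x _ => by split_ifs <;> tauto
        _ = av P π j 0 k := by
            rw [Finset.sum_ite_eq' Finset.univ k]
            simp only [Finset.mem_univ, if_true]
            show _ = if k = j then 0 else π k
            by_cases hk : k = j <;> simp [hk]
  | succ t ih =>
      -- step 1: reindex by (y, g) ↦ snoc g y
      have hstep1 : ∑ g : Fin (t+2) → S, (if (∀ i, g i ≠ j) ∧ g (Fin.last (t+1)) = k
            then π (g 0) * ∏ i : Fin (t+1), P (g i.castSucc) (g i.succ) else 0)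
          = ∑ y : S, ∑ g : Fin (t+1) → S,
              (if (∀ i, g i ≠ j) ∧ (y ≠ j ∧ y = k)
                then (π (g 0) * ∏ i : Fin t, P (g i.castSucc) (g i.succ))
                  * P (g (Fin.last t)) y else 0) := by
        have e := Fin.snocEquiv (fun _ : Fin (t+2) => S)
        calc ∑ g : Fin (t+2) → S, (if (∀ i, g i ≠ j) ∧ g (Fin.last (t+1)) = k
              then π (g 0) * ∏ i : Fin (t+1), P (g i.castSucc) (g i.succ) else 0)
            = ∑ p : S × (Fin (t+1) → S),
                (if (∀ i, (Fin.snocEquiv (fun _ => S)) p i ≠ j)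
                    ∧ (Fin.snocEquiv (fun _ => S)) p (Fin.last (t+1)) = k
                  then π ((Fin.snocEquiv (fun _ => S)) p 0)
                    * ∏ i : Fin (t+1), P ((Fin.snocEquiv (fun _ => S)) p i.castSucc)
                        ((Fin.snocEquiv (fun _ => S)) p i.succ) else 0) :=
              (Fintype.sum_equiv (Fin.snocEquiv (fun _ => S)) _ _ (fun p => rfl)).symm
          _ = ∑ y : S, ∑ g : Fin (t+1) → S,
                (if (∀ i, (Fin.snocEquiv (fun _ => S)) (y, g) i ≠ j)
                    ∧ (Fin.snocEquiv (fun _ => S)) (y, g) (Fin.last (t+1)) = k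
                  then π ((Fin.snocEquiv (fun _ => S)) (y, g) 0)
                    * ∏ i : Fin (t+1), P ((Fin.snocEquiv (fun _ => S)) (y, g) i.castSucc)
                        ((Fin.snocEquiv (fun _ => S)) (y, g) i.succ) else 0) :=
              Fintype.sum_prod_type _
          _ = _ := by
              apply Finset.sum_congr rfl
              intro y _
              apply Finset.sum_congr rfl
              intro g _
              have happ : (Fin.snocEquiv (fun _ : Fin (t+2) => S)) (y, g) = Fin.snoc g y := by
                funext i
                simp [Fin.snocEquiv]
              rw [happ]
              have hcond : (∀ i : Fin (t+2), (Fin.snoc g y : Fin (t+2) → S) i ≠ j)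
                  ↔ ((∀ i : Fin (t+1), g i ≠ j) ∧ y ≠ j) := by
                constructor
                · intro h
                  refine ⟨fun i => ?_, ?_⟩
                  · have := h i.castSucc; rwa [Fin.snoc_castSucc] at this
                  · have := h (Fin.last (t+1)); rwa [Fin.snoc_last] at this
                · rintro ⟨h1, h2⟩ i
                  induction i using Fin.lastCases with
                  | last => rwa [Fin.snoc_last]
                  | cast i => rw [Fin.snoc_castSucc]; exact h1 i
              have hlast : (Fin.snoc g y : Fin (t+2) → S) (Fin.last (t+1)) = y :=
                Fin.snoc_last _ _
              have h0 : (Fin.snoc g y : Fin (t+2) → S) 0 = g 0 := by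
                show (Fin.snoc g y : Fin (t+2) → S) (Fin.castSucc 0) = g 0
                rw [Fin.snoc_castSucc]
              have hprod : ∏ i : Fin (t+1),
                    P ((Fin.snoc g y : Fin (t+2) → S) i.castSucc)
                      ((Fin.snoc g y : Fin (t+2) → S) i.succ)
                  = (∏ i : Fin t, P (g i.castSucc) (g i.succ)) * P (g (Fin.last t)) y := by
                rw [Fin.prod_univ_castSucc]
                congr 1
                · apply Finset.prod_congr rfl
                  intro i _
                  rw [Fin.snoc_castSucc, Fin.succ_castSucc, Fin.snoc_castSucc]
                · rw [Fin.succ_last, Fin.snoc_last, Fin.snoc_castSucc]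
              have hcond2 : ((∀ i : Fin (t+2), (Fin.snoc g y : Fin (t+2) → S) i ≠ j)
                    ∧ (Fin.snoc g y : Fin (t+2) → S) (Fin.last (t+1)) = k)
                  ↔ ((∀ i : Fin (t+1), g i ≠ j) ∧ (y ≠ j ∧ y = k)) := by
                rw [hlast, hcond]; tauto
              rw [if_congr hcond2 (by rw [h0, hprod]) rfl]
              split_ifs with hsp
              · ring
              · rfl
      rw [hstep1]
      -- step 2: collapse the y-sum at y = k
      have hstep2 : ∀ g : Fin (t+1) → S, ∑ y : S,
            (if (∀ i, g i ≠ j) ∧ (y ≠ j ∧ y = k)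
              then (π (g 0) * ∏ i : Fin t, P (g i.castSucc) (g i.succ))
                * P (g (Fin.last t)) y else 0)
          = (if (∀ i, g i ≠ j) ∧ k ≠ j
              then (π (g 0) * ∏ i : Fin t, P (g i.castSucc) (g i.succ))
                * P (g (Fin.last t)) k else 0) := by
        intro g
        have h3 : ∀ y : S, (if (∀ i, g i ≠ j) ∧ (y ≠ j ∧ y = k)
              then (π (g 0) * ∏ i : Fin t, P (g i.castSucc) (g i.succ))
                * P (g (Fin.last t)) y else 0)
            = (if y = k then (if (∀ i, g i ≠ j) ∧ k ≠ j
                then (π (g 0) * ∏ i : Fin t, P (g i.castSucc) (g i.succ))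
                  * P (g (Fin.last t)) k else 0) else 0) := by
          intro y
          by_cases hyk : y = k
          · subst hyk; split_ifs <;> tauto
          · rw [if_neg (by tauto), if_neg hyk]
        rw [Finset.sum_congr rfl fun y _ => h3 y, Finset.sum_ite_eq' Finset.univ k]
        simp
      rw [Finset.sum_comm, Finset.sum_congr rfl fun g _ => hstep2 g]
      -- step 3: compare with the recursion for av
      by_cases hk : k = j
      · subst hk
        rw [av_apply_self]
        apply Finset.sum_eq_zero
        intro g _
        rw [if_neg (by tauto)]
      · have hav : av P π j (t+1) k = ∑ m, av P π j t m * P m k := by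
          show (if k = j then 0 else ∑ m, av P π j t m * P m k) = _
          rw [if_neg hk]
        rw [hav]
        symm
        calc ∑ m, av P π j t m * P m k
            = ∑ m, (∑ g : Fin (t+1) → S, if (∀ i, g i ≠ j) ∧ g (Fin.last t) = m
                then π (g 0) * ∏ i : Fin t, P (g i.castSucc) (g i.succ) else 0) * P m k :=
              Finset.sum_congr rfl fun m _ => by rw [ih m]
          _ = ∑ m, ∑ g : Fin (t+1) → S, (if (∀ i, g i ≠ j) ∧ g (Fin.last t) = m
                then (π (g 0) * ∏ i : Fin t, P (g i.castSucc) (g i.succ)) * P m k else 0) := by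
              apply Finset.sum_congr rfl
              intro m _
              rw [Finset.sum_mul]
              exact Finset.sum_congr rfl fun g _ => by rw [ite_mul, zero_mul]
          _ = ∑ g : Fin (t+1) → S, ∑ m, (if (∀ i, g i ≠ j) ∧ g (Fin.last t) = m
                then (π (g 0) * ∏ i : Fin t, P (g i.castSucc) (g i.succ)) * P m k else 0) :=
              Finset.sum_comm
          _ = ∑ g : Fin (t+1) → S, (if (∀ i, g i ≠ j) ∧ k ≠ j
                then (π (g 0) * ∏ i : Fin t, P (g i.castSucc) (g i.succ))
                  * P (g (Fin.last t)) k else 0) := by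
              apply Finset.sum_congr rfl
              intro g _
              have h5 : ∀ m : S, (if (∀ i, g i ≠ j) ∧ g (Fin.last t) = m
                    then (π (g 0) * ∏ i : Fin t, P (g i.castSucc) (g i.succ)) * P m k else 0)
                  = (if m = g (Fin.last t) then (if (∀ i, g i ≠ j)
                      then (π (g 0) * ∏ i : Fin t, P (g i.castSucc) (g i.succ))
                        * P (g (Fin.last t)) k else 0) else 0) := by
                intro m
                by_cases hm : m = g (Fin.last t)
                · subst hm; split_ifs <;> tauto
                · rw [if_neg (by tauto), if_neg hm]
              rw [Finset.sum_congr rfl fun m _ => h5 m, Finset.sum_ite_eq' Finset.univ]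
              simp only [Finset.mem_univ, if_true]
              exact if_congr (by tauto) rfl rfl

lemma path_sum_total (j : S) (t : ℕ) :
    ∑ g : Fin (t+1) → S, (if ∀ i, g i ≠ j
      then π (g 0) * ∏ i : Fin t, P (g i.castSucc) (g i.succ) else 0)
      = qa P π j t := by
  show _ = ∑ k, av P π j t k
  symm
  calc ∑ k, av P π j t k
      = ∑ k, ∑ g : Fin (t+1) → S, (if (∀ i, g i ≠ j) ∧ g (Fin.last t) = k
          then π (g 0) * ∏ i : Fin t, P (g i.castSucc) (g i.succ) else 0) :=
        Finset.sum_congr rfl fun k _ => (path_sum (P := P) (π := π) j t k).symm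
    _ = ∑ g : Fin (t+1) → S, ∑ k, (if (∀ i, g i ≠ j) ∧ g (Fin.last t) = k
          then π (g 0) * ∏ i : Fin t, P (g i.castSucc) (g i.succ) else 0) :=
        Finset.sum_comm
    _ = _ := by
        apply Finset.sum_congr rfl
        intro g _
        have h5 : ∀ m : S, (if (∀ i, g i ≠ j) ∧ g (Fin.last t) = m
              then π (g 0) * ∏ i : Fin t, P (g i.castSucc) (g i.succ) else 0)
            = (if m = g (Fin.last t) then (if (∀ i, g i ≠ j)
                then π (g 0) * ∏ i : Fin t, P (g i.castSucc) (g i.succ) else 0) else 0) := by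
          intro m
          by_cases hm : m = g (Fin.last t)
          · subst hm; split_ifs <;> tauto
          · rw [if_neg (by tauto), if_neg hm]
        rw [Finset.sum_congr rfl fun m _ => h5 m, Finset.sum_ite_eq' Finset.univ]
        simp

/-! ## Part IV : measure bounds -/

variable {Ω : Type*} [MeasurableSpace Ω] (μ : Measure Ω) [IsProbabilityMeasure μ]
  (X : ℕ → Ω → S)

lemma cylinder_measure
    (hchain : IsMarkovChain μ (fun t => X t) (fun a b => P a b))
    (hinit : ∀ s, (μ {ω | X 0 ω = s}).toReal = π s)
    (t : ℕ) (h : ℕ → S) :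
    (μ {ω | ∀ i ≤ t, X i ω = h i}).toReal
      = π (h 0) * ∏ i ∈ Finset.range t, P (h i) (h (i+1)) := by
  induction t with
  | zero =>
      have hset : {ω | ∀ i ≤ 0, X i ω = h i} = {ω | X 0 ω = h 0} := by
        ext ω
        constructor
        · intro hω; exact hω 0 le_rfl
        · intro hω i hi
          rw [Nat.le_zero.mp hi]; exact hω
      rw [hset, hinit]
      simp
  | succ t ih =>
      have hset : {ω | ∀ i ≤ t + 1, X i ω = h i}
          = {ω | X (t + 1) ω = h (t + 1) ∧ ∀ i ≤ t, X i ω = h i} := by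
        ext ω
        constructor
        · intro hω
          exact ⟨hω (t+1) le_rfl, fun i hi => hω i (le_trans hi (Nat.le_succ t))⟩
        · rintro ⟨h1, h2⟩ i hi
          rcases eq_or_lt_of_le hi with h3 | h3
          · rw [h3]; exact h1
          · exact h2 i (by omega)
      rw [hset, hchain t h (h (t+1)), ih, Finset.prod_range_succ]
      ring

lemma hitting_prob_le_qa
    (hchain : IsMarkovChain μ (fun t => X t) (fun a b => P a b))
    (hinit : ∀ s, (μ {ω | X 0 ω = s}).toReal = π s)
    (W : S → Ω → ℕ) (hW : ∀ j ω, W j ω = sInf {t : ℕ | X t ω = j})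
    (j : S) (t : ℕ) :
    (μ {ω | t < W j ω}).toReal ≤ qa P π j t := by
  classical
  have hmin : ∀ i : ℕ, min i t < t + 1 := fun i => by omega
  set A : Finset (Fin (t+1) → S) :=
    Finset.univ.filter (fun g : Fin (t+1) → S => ∀ i, g i ≠ j) with hA
  set Cyl : (Fin (t+1) → S) → Set Ω :=
    fun g => {ω | ∀ i ≤ t, X i ω = g ⟨min i t, hmin i⟩} with hCyl
  have hsub : {ω | t < W j ω} ⊆ ⋃ g ∈ A, Cyl g := by
    intro ω hω
    have havoid : ∀ i ≤ t, X i ω ≠ j := by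
      intro i hi hc
      have h1 : W j ω ≤ i := by
        rw [hW j ω]
        exact Nat.sInf_le hc
      have h2 : t < W j ω := hω
      omega
    have hg : (fun i : Fin (t+1) => X i ω) ∈ A := by
      rw [hA, Finset.mem_filter]
      exact ⟨Finset.mem_univ _, fun i => havoid i (Nat.lt_succ_iff.mp i.isLt)⟩
    have hc : ω ∈ Cyl (fun i : Fin (t+1) => X i ω) := by
      intro i hi
      show X i ω = X (min i t) ω
      rw [min_eq_left hi]
    exact Set.mem_biUnion hg hc
  have hmeas : (μ {ω | t < W j ω}).toReal ≤ ∑ g ∈ A, (μ (Cyl g)).toReal := by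
    have h1 : μ {ω | t < W j ω} ≤ ∑ g ∈ A, μ (Cyl g) :=
      le_trans (measure_mono hsub) (measure_biUnion_finset_le A Cyl)
    have h3 : (∑ g ∈ A, μ (Cyl g)) ≠ ⊤ :=
      ENNReal.sum_ne_top.mpr fun g _ => measure_ne_top μ _
    calc (μ {ω | t < W j ω}).toReal
        ≤ (∑ g ∈ A, μ (Cyl g)).toReal := ENNReal.toReal_mono h3 h1
      _ = ∑ g ∈ A, (μ (Cyl g)).toReal :=
          ENNReal.toReal_sum (fun g _ => measure_ne_top μ _)
  have hval : ∀ g ∈ A, (μ (Cyl g)).toReal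
      = π (g 0) * ∏ i : Fin t, P (g i.castSucc) (g i.succ) := by
    intro g _
    have := cylinder_measure μ X hchain hinit t (fun i => g ⟨min i t, hmin i⟩)
    rw [hCyl]
    rw [this]
    congr 1
    · rw [← Fin.prod_univ_eq_prod_range
        (fun i => P (g ⟨min i t, hmin i⟩) (g ⟨min (i+1) t, hmin (i+1)⟩)) t]
      apply Finset.prod_congr rfl
      intro i _
      congr 1 <;> apply congrArg <;> apply Fin.ext <;> simp <;> omega
  calc (μ {ω | t < W j ω}).toReal
      ≤ ∑ g ∈ A, (μ (Cyl g)).toReal := hmeas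
    _ = ∑ g ∈ A, π (g 0) * ∏ i : Fin t, P (g i.castSucc) (g i.succ) :=
        Finset.sum_congr rfl hval
    _ = qa P π j t := by
        rw [hA, Finset.sum_filter]
        exact path_sum_total (P := P) (π := π) j t

end AvgHit

/-- the average hitting time `w̄ = ∑_j π_j E[W_j]` satisfies
`w̄ ≤ (|S| - 1) t*`, where `t* = sup_l E[T_{(l)}]` is the worst-case expected fastest
strong stationary time, `E[T_{(l)}] = ∑_{t≥0} (1 - inf_i P^t(l,i)/π_i)`. -/
theorem average_hitting_bound {S : Type*} [Fintype S] [DecidableEq S] [Nonempty S]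
    {Ω : Type*} [MeasurableSpace Ω] (μ : Measure Ω) [IsProbabilityMeasure μ]
    (X : ℕ → Ω → S)
    (P : Matrix S S ℝ) (π : S → ℝ)
    (hP0 : ∀ i k, 0 ≤ P i k) (hP1 : ∀ i, ∑ k, P i k = 1)
    (hirr : ∀ i k, ∃ t, 0 < (P ^ t) i k)
    (herg : ∃ t, ∀ i k, 0 < (P ^ t) i k)
    (hπpos : ∀ s, 0 < π s) (hπsum : ∑ s, π s = 1)
    (hstat : Matrix.vecMul π P = π)
    (hchain : IsMarkovChain μ (fun t => X t) (fun a b => P a b))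
    (hinit : ∀ s, (μ {ω | X 0 ω = s}).toReal = π s)
    (W : S → Ω → ℕ) (hW : ∀ j ω, W j ω = sInf {t : ℕ | X t ω = j}) :
    ∑ j : S, π j * ∑' t : ℕ, (μ {ω | t < W j ω}).toReal
      ≤ (Fintype.card S - 1 : ℝ)
        * ⨆ l : S, ∑' t : ℕ, (1 - ⨅ i : S, (P ^ t) l i / π i) := by
  classical
  show _ ≤ (Fintype.card S - 1 : ℝ) * ⨆ l : S, ∑' t : ℕ, AvgHit.sep P π l t
  have hqab := fun j => AvgHit.qa_summable_and_bound hP0 hP1 hπpos hπsum hstat herg j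
  have hqa := fun j t => AvgHit.hitting_prob_le_qa (P := P) (π := π) μ X hchain hinit W hW j t
  -- step per j
  have hstep : ∀ j : S, π j * ∑' t : ℕ, (μ {ω | t < W j ω}).toReal
      ≤ ∑ l ∈ Finset.univ.erase j, π l * ∑' t, AvgHit.sep P π l t := by
    intro j
    have hE : ∑' t : ℕ, (μ {ω | t < W j ω}).toReal ≤ ∑' t, AvgHit.qa P π j t :=
      Summable.tsum_le_tsum (hqa j)
        (Summable.of_nonneg_of_le (fun t => ENNReal.toReal_nonneg) (hqa j) (hqab j).1)
        (hqab j).1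
    calc π j * ∑' t : ℕ, (μ {ω | t < W j ω}).toReal
        ≤ π j * ∑' t, AvgHit.qa P π j t :=
          mul_le_mul_of_nonneg_left hE (hπpos j).le
      _ ≤ ∑' t, AvgHit.Dj P π j t := (hqab j).2
      _ ≤ ∑ l ∈ Finset.univ.erase j, π l * ∑' t, AvgHit.sep P π l t :=
          AvgHit.tsum_Dj_le hP0 hP1 hπpos hπsum hstat herg j
  -- assemble
  have hswap : ∑ j : S, ∑ l ∈ Finset.univ.erase j, π l * ∑' t, AvgHit.sep P π l t
      = ∑ l : S, ∑ j ∈ Finset.univ.erase l, π l * ∑' t, AvgHit.sep P π l t := by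
    apply Finset.sum_comm' (s := Finset.univ) (t := fun j => Finset.univ.erase j)
      (t' := Finset.univ) (s' := fun l => Finset.univ.erase l)
    intro x y
    simp only [Finset.mem_univ, Finset.mem_erase, true_and, and_true]
    constructor <;> intro h <;> simp_all [ne_comm]
  have hcard : ∀ l : S, ((Finset.univ.erase l).card : ℝ) = (Fintype.card S : ℝ) - 1 := by
    intro l
    rw [Finset.card_erase_of_mem (Finset.mem_univ l), Finset.card_univ]
    have : 1 ≤ Fintype.card S := Fintype.card_pos
    push_cast [Nat.cast_sub this]
    ring
  have hconst : ∀ l : S, ∑ j ∈ Finset.univ.erase l, π l * ∑' t, AvgHit.sep P π l t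
      = ((Fintype.card S : ℝ) - 1) * (π l * ∑' t, AvgHit.sep P π l t) := by
    intro l
    rw [Finset.sum_const, nsmul_eq_mul, hcard l]
  have hbdd : BddAbove (Set.range fun l : S => ∑' t, AvgHit.sep P π l t) :=
    Finite.bddAbove_range _
  have hsup : ∑ l : S, π l * ∑' t, AvgHit.sep P π l t
      ≤ ⨆ l : S, ∑' t, AvgHit.sep P π l t := by
    calc ∑ l : S, π l * ∑' t, AvgHit.sep P π l t
        ≤ ∑ l : S, π l * ⨆ l : S, ∑' t, AvgHit.sep P π l t := by
          apply Finset.sum_le_sum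
          intro l _
          exact mul_le_mul_of_nonneg_left
            (le_ciSup (f := fun l : S => ∑' t, AvgHit.sep P π l t) hbdd l) (hπpos l).le
      _ = ⨆ l : S, ∑' t, AvgHit.sep P π l t := by
          rw [← Finset.sum_mul, hπsum, one_mul]
  have hn1 : (0:ℝ) ≤ (Fintype.card S : ℝ) - 1 := by
    have : 1 ≤ Fintype.card S := Fintype.card_pos
    have : (1:ℝ) ≤ (Fintype.card S : ℝ) := by exact_mod_cast this
    linarith
  calc ∑ j : S, π j * ∑' t : ℕ, (μ {ω | t < W j ω}).toReal
      ≤ ∑ j : S, ∑ l ∈ Finset.univ.erase j, π l * ∑' t, AvgHit.sep P π l t :=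
        Finset.sum_le_sum fun j _ => hstep j
    _ = ∑ l : S, ((Fintype.card S : ℝ) - 1) * (π l * ∑' t, AvgHit.sep P π l t) := by
        rw [hswap]
        exact Finset.sum_congr rfl fun l _ => hconst l
    _ = ((Fintype.card S : ℝ) - 1) * ∑ l : S, π l * ∑' t, AvgHit.sep P π l t := by
        rw [Finset.mul_sum]
    _ ≤ (Fintype.card S - 1 : ℝ) * ⨆ l : S, ∑' t, AvgHit.sep P π l t :=
        mul_le_mul_of_nonneg_left hsup hn1
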